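/- Let A, B, C be sets, let S ⊆ A × B and T ⊆ B × C be finite relations, let Δ ≥ 0 be a real number, and let L ⊆ B be a set such that every b ∈ L satisfies |{a ∈ A : (a, b) ∈ S}| ≤ Δ or |{c ∈ C : (b, c) ∈ T}| ≤ Δ. Then the number of pairs (a, c) ∈ A × C such that there exists b ∈ L with (a, b) ∈ S and (b, c) ∈ T is at most (|S| + |T|) · Δ. -/

import Mathlib

/-- Let `S ⊆ A × B`, `T ⊆ B × C` be finite relations, `Δ ≥ 0` a real, and
`L ⊆ B` a set all of whose elements are light: each `b ∈ L` has degree at most `Δ` in `S`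
or degree at most `Δ` in `T`.  Then the number of pairs `(a, c)` joined via some `b ∈ L`
is at most `(|S| + |T|) · Δ`. -/
theorem stmt12 {A B C : Type*} (S : Set (A × B)) (T : Set (B × C))
    (hS : S.Finite) (hT : T.Finite) (Δ : ℝ) (hΔ : 0 ≤ Δ) (L : Set B)
    (hL : ∀ b ∈ L, (({a : A | (a, b) ∈ S}).ncard : ℝ) ≤ Δ ∨
        (({c : C | (b, c) ∈ T}).ncard : ℝ) ≤ Δ) :
    (({p : A × C | ∃ b ∈ L, (p.1, b) ∈ S ∧ (b, p.2) ∈ T}).ncard : ℝ)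
      ≤ ((S.ncard : ℝ) + (T.ncard : ℝ)) * Δ := by
  classical
  set P := {p : A × C | ∃ b ∈ L, (p.1, b) ∈ S ∧ (b, p.2) ∈ T} with hPdef
  have hPfin : P.Finite := by
    apply ((hS.image Prod.fst).prod (hT.image Prod.snd)).subset
    rintro ⟨a, c⟩ ⟨b, hb, hab, hbc⟩
    exact ⟨⟨⟨a, b⟩, hab, rfl⟩, ⟨⟨b, c⟩, hbc, rfl⟩⟩
  rcases P.eq_empty_or_nonempty with hP | ⟨⟨a0, c0⟩, b0, hb0, _, _⟩
  · rw [hP]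
    simpa using mul_nonneg (by positivity) hΔ
  have hSb : ∀ b : B, ({a : A | (a, b) ∈ S}).Finite := fun b =>
    (hS.image Prod.fst).subset (fun a ha => ⟨(a, b), ha, rfl⟩)
  have hTb : ∀ b : B, ({c : C | (b, c) ∈ T}).Finite := fun b =>
    (hT.image Prod.snd).subset (fun c hc => ⟨(b, c), hc, rfl⟩)
  set f : A × C → (A × B) ⊕ (B × C) := fun p =>
    if h : p ∈ P then
      if (({a : A | (a, h.choose) ∈ S}).ncard : ℝ) ≤ Δ then Sum.inr (h.choose, p.2)
      else Sum.inl (p.1, h.choose)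
    else Sum.inl (p.1, b0) with hf
  have hfval : ∀ p, ∀ h : p ∈ P,
      (f p = Sum.inr (h.choose, p.2) ∧ (({a : A | (a, h.choose) ∈ S}).ncard : ℝ) ≤ Δ) ∨
      (f p = Sum.inl (p.1, h.choose) ∧ ¬ (({a : A | (a, h.choose) ∈ S}).ncard : ℝ) ≤ Δ) := by
    intro p h
    rw [hf]
    simp only [dif_pos h]
    split_ifs with hc
    exacts [Or.inl ⟨rfl, hc⟩, Or.inr ⟨rfl, hc⟩]
  set t : Finset ((A × B) ⊕ (B × C)) := hS.toFinset.disjSum hT.toFinset with ht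
  have hmaps : ∀ p ∈ hPfin.toFinset, f p ∈ t := by
    intro p hp
    rw [Set.Finite.mem_toFinset] at hp
    obtain ⟨hbL, hbS, hbT⟩ := hp.choose_spec
    rcases hfval p hp with ⟨hfp, -⟩ | ⟨hfp, -⟩
    · rw [hfp]; exact Finset.inr_mem_disjSum.mpr (hT.mem_toFinset.mpr hbT)
    · rw [hfp]; exact Finset.inl_mem_disjSum.mpr (hS.mem_toFinset.mpr hbS)
  have hsum := Finset.card_eq_sum_card_fiberwise hmaps
  have hfiber : ∀ y ∈ t, (((hPfin.toFinset.filter fun p => f p = y).card : ℝ)) ≤ Δ := by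
    intro y hy
    rcases Finset.eq_empty_or_nonempty (hPfin.toFinset.filter fun p => f p = y) with he | ⟨q, hq⟩
    · rw [he]; simpa using hΔ
    rw [Finset.mem_filter, Set.Finite.mem_toFinset] at hq
    obtain ⟨hqP, hqf⟩ := hq
    obtain ⟨hqL, hqS, hqT⟩ := hqP.choose_spec
    set b := hqP.choose with hb
    rcases hfval q hqP with ⟨hfq, hc⟩ | ⟨hfq, hc⟩
    · -- y = Sum.inr (b, q.2); fiber injects into {a | (a, b) ∈ S}
      refine le_trans ?_ hc
      rw [Set.ncard_eq_toFinset_card _ (hSb b)]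
      norm_cast
      apply Finset.card_le_card_of_injOn (fun p => p.1)
      · intro p hp
        rw [Finset.mem_coe, Finset.mem_filter, Set.Finite.mem_toFinset] at hp
        obtain ⟨hpP, hpf⟩ := hp
        obtain ⟨hpL, hpS, hpT⟩ := hpP.choose_spec
        rw [← hqf, hfq] at hpf
        rcases hfval p hpP with ⟨hfp, -⟩ | ⟨hfp, -⟩
        · rw [hfp] at hpf
          simp only [Sum.inr.injEq, Prod.mk.injEq] at hpf
          rw [Finset.mem_coe, Set.Finite.mem_toFinset, Set.mem_setOf_eq, hb, ← hpf.1]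
          exact hpS
        · rw [hfp] at hpf; simp at hpf
      · intro p hp p' hp' hpp
        rw [Finset.mem_coe, Finset.mem_filter, Set.Finite.mem_toFinset] at hp hp'
        obtain ⟨hpP, hpf⟩ := hp
        obtain ⟨hp'P, hp'f⟩ := hp'
        rw [← hqf, hfq] at hpf hp'f
        rcases hfval p hpP with ⟨hfp, -⟩ | ⟨hfp, -⟩
        · rcases hfval p' hp'P with ⟨hfp', -⟩ | ⟨hfp', -⟩
          · rw [hfp] at hpf; rw [hfp'] at hp'f
            simp only [Sum.inr.injEq, Prod.mk.injEq] at hpf hp'f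
            exact Prod.ext hpp (by rw [hpf.2, hp'f.2])
          · rw [hfp'] at hp'f; simp at hp'f
        · rw [hfp] at hpf; simp at hpf
    · -- y = Sum.inl (q.1, b); fiber injects into {c | (b, c) ∈ T}
      have hcT : (({c : C | (b, c) ∈ T}).ncard : ℝ) ≤ Δ := (hL b hqL).resolve_left hc
      refine le_trans ?_ hcT
      rw [Set.ncard_eq_toFinset_card _ (hTb b)]
      norm_cast
      apply Finset.card_le_card_of_injOn (fun p => p.2)
      · intro p hp
        rw [Finset.mem_coe, Finset.mem_filter, Set.Finite.mem_toFinset] at hp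
        obtain ⟨hpP, hpf⟩ := hp
        obtain ⟨hpL, hpS, hpT⟩ := hpP.choose_spec
        rw [← hqf, hfq] at hpf
        rcases hfval p hpP with ⟨hfp, -⟩ | ⟨hfp, -⟩
        · rw [hfp] at hpf; simp at hpf
        · rw [hfp] at hpf
          simp only [Sum.inl.injEq, Prod.mk.injEq] at hpf
          rw [Finset.mem_coe, Set.Finite.mem_toFinset, Set.mem_setOf_eq, hb, ← hpf.2]
          exact hpT
      · intro p hp p' hp' hpp
        rw [Finset.mem_coe, Finset.mem_filter, Set.Finite.mem_toFinset] at hp hp'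
        obtain ⟨hpP, hpf⟩ := hp
        obtain ⟨hp'P, hp'f⟩ := hp'
        rw [← hqf, hfq] at hpf hp'f
        rcases hfval p hpP with ⟨hfp, -⟩ | ⟨hfp, -⟩
        · rw [hfp] at hpf; simp at hpf
        · rcases hfval p' hp'P with ⟨hfp', -⟩ | ⟨hfp', -⟩
          · rw [hfp'] at hp'f; simp at hp'f
          · rw [hfp] at hpf; rw [hfp'] at hp'f
            simp only [Sum.inl.injEq, Prod.mk.injEq] at hpf hp'f
            exact Prod.ext (by rw [hpf.1, hp'f.1]) hpp
  have hcardt : (t.card : ℝ) = (S.ncard : ℝ) + (T.ncard : ℝ) := by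
    rw [ht, Finset.card_disjSum, Set.ncard_eq_toFinset_card _ hS,
      Set.ncard_eq_toFinset_card _ hT]
    push_cast; ring
  calc (P.ncard : ℝ) = (hPfin.toFinset.card : ℝ) := by
        rw [Set.ncard_eq_toFinset_card _ hPfin]
    _ = ∑ y ∈ t, (((hPfin.toFinset.filter fun p => f p = y).card : ℝ)) := by
        rw [hsum]; push_cast; rfl
    _ ≤ ∑ y ∈ t, Δ := Finset.sum_le_sum hfiber
    _ = (t.card : ℝ) * Δ := by rw [Finset.sum_const, nsmul_eq_mul]
    _ = ((S.ncard : ℝ) + (T.ncard : ℝ)) * Δ := by rw [hcardt]
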